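/- H₊ is closed under the Kleisli lifting of H₀M: for every f : X → H₀M Y whose values all lie in H₊ Y, and every (d,e) ∈ H₊ X, the pair f^†(d,e) lies in H₊ Y. -/

import Mathlib

open scoped ENNReal NNReal
open Classical

universe u v w

/-- Raw trajectories: a duration in `ℝ≥0∞` and a partial evolution `ℝ≥0 → Option X`. -/
abbrev Traj (X : Type u) := ℝ≥0∞ × (ℝ≥0 → Option X)

/-- The flattening condition: if the duration is finite, the evolution is constant
from the duration onwards.  Membership in `H₀M X` means exactly `Flat`. -/
def Flat {X : Type u} (p : Traj X) : Prop :=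
  ∀ t : ℝ≥0, p.1 ≤ (t : ℝ≥0∞) → p.2 t = p.2 p.1.toNNReal

/-- The unit of `H₀M`. -/
def eta {X : Type u} (x : X) : Traj X := (0, fun _ => some x)

/-- The Kleisli lifting `f^†` of the monad `H₀M`. -/
noncomputable def kl {X : Type u} {Y : Type v} (f : X → Traj Y) (p : Traj X) : Traj Y :=
  if p.1 = ⊤ then (p.1, fun t => (p.2 t).bind fun x' => (f x').2 0)
  else
    match p.2 p.1.toNNReal with
    | none => (p.1, fun t => (p.2 t).bind fun x' => (f x').2 0)
    | some x =>
        (p.1 + (f x).1,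
          fun t =>
            if (t : ℝ≥0∞) < p.1 then (p.2 t).bind fun x' => (f x').2 0
            else (f x).2 (t - p.1.toNNReal))

/-- Membership in `H₊ X ⊆ H₀M X`: the evolution is not everywhere `none`, and it is
defined at every time instant strictly below the duration. -/
def memHp {X : Type u} (p : Traj X) : Prop :=
  p.2 ≠ (fun _ => none) ∧ ∀ t : ℝ≥0, (t : ℝ≥0∞) < p.1 → p.2 t ≠ none

/-- Membership in `H X ⊆ H₀M X`: either the evolution is total, or the duration is `∞`
and the domain of the evolution is downward closed. -/
def memH {X : Type u} (p : Traj X) : Prop :=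
  (∀ t, p.2 t ≠ none) ∨
    (p.1 = ⊤ ∧ ∀ s t : ℝ≥0, s ≤ t → p.2 t ≠ none → p.2 s ≠ none)

/-- The approximation order `⊑` on `H₀M X`. -/
def TrajLE {X : Type u} (p q : Traj X) : Prop :=
  p.1 ≤ q.1 ∧ (∀ t, p.2 t ≠ none → q.2 t = p.2 t) ∧
    (p.1 ≠ ⊤ → p.2 p.1.toNNReal ≠ none → p.1 = q.1)

/-- Join of an ω-chain in `H₀M X`: the duration is the supremum of the durations, and
the evolution at `t` is the common value `(c i).2 t` whenever it is `≠ none` for some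
`i`, and `none` otherwise. -/
noncomputable def chainJoin {X : Type u} (c : ℕ → Traj X) : Traj X :=
  (⨆ i, (c i).1,
    fun t => if h : ∃ i, (c i).2 t ≠ none then (c h.choose).2 t else none)

/-- `d⋆ = sup { s < d ∣ e is defined on [0, s) }`. -/
noncomputable def dstar {X : Type u} (p : Traj X) : ℝ≥0∞ :=
  sSup {s : ℝ≥0∞ | s < p.1 ∧ ∀ t : ℝ≥0, (t : ℝ≥0∞) < s → p.2 t ≠ none}

/-- The retraction `ρ : H₀M X → H₀M X` onto `H X`. -/
noncomputable def rho {X : Type u} (p : Traj X) : Traj X :=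
  ((if ∀ t, p.2 t ≠ none then p.1 else ⊤),
    fun t =>
      if (t : ℝ≥0∞) ≤ dstar p then p.2 t
      else if ∀ t', p.2 t' ≠ none then p.2 (dstar p).toNNReal else none)

/-- The iterates `f⁽ⁿ⁾` of `f : X → H₀M (Y ⊕ X)`. -/
noncomputable def iter {X Y : Type u} (f : X → Traj (Y ⊕ X)) : ℕ → X → Traj Y
  | 0, _ => (0, fun _ => none)
  | n + 1, x => kl (Sum.elim eta (iter f n)) (f x)

/-- The least-fixpoint iteration `f^‡ x = ⊔ₙ f⁽ⁿ⁾ x`. -/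
noncomputable def iterStar {X Y : Type u} (f : X → Traj (Y ⊕ X)) (x : X) : Traj Y :=
  chainJoin fun n => iter f n x

/-- `f : X → H₊ (A ⊕ B)` is progressive in `B` (guarded in the second summand). -/
def Prog {X : Type u} {A B : Type v} (f : X → Traj (A ⊕ B)) : Prop :=
  ∀ x, ∃ a : A, (f x).2 0 = some (Sum.inl a)


lemma ev_zero_ne_none {Y : Type v} (q : Traj Y) (hq1 : Flat q) (hq2 : memHp q) :
    q.2 0 ≠ none := by
  by_cases h : (0:ℝ≥0∞) < q.1
  · exact hq2.2 0 h
  · push_neg at h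
    have hq0 : q.1 = 0 := le_antisymm h zero_le
    intro hnone
    apply hq2.1
    funext t
    have ht := hq1 t (by simp [hq0])
    rw [hq0] at ht
    simpa [ht] using hnone

/-- `H₊` is closed under the Kleisli lifting of `H₀M`. -/
theorem Hplus_closed_under_kl {X : Type u} {Y : Type v} (f : X → Traj Y)
    (hf : ∀ x, Flat (f x) ∧ memHp (f x))
    (p : Traj X) (hp : Flat p) (hpmem : memHp p) :
    Flat (kl f p) ∧ memHp (kl f p) := by
  by_cases hd : p.1 = ⊤
  · rw [kl, if_pos hd]
    refine ⟨fun t ht => ?_, fun heq => ?_, fun t ht hn => ?_⟩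
    · exfalso
      rw [hd, top_le_iff] at ht
      exact ENNReal.coe_ne_top ht
    · obtain ⟨t, htn⟩ := Function.ne_iff.mp hpmem.1
      obtain ⟨x', hx'⟩ := Option.ne_none_iff_exists'.mp htn
      have := congrFun heq t
      simp only [hx', Option.bind_some] at this
      exact ev_zero_ne_none (f x') (hf x').1 (hf x').2 this
    · obtain ⟨x', hx'⟩ := Option.ne_none_iff_exists'.mp (hpmem.2 t ht)
      simp only [hx', Option.bind_some] at hn
      exact ev_zero_ne_none (f x') (hf x').1 (hf x').2 hn
  · have hp1 : p.1 = (p.1.toNNReal : ℝ≥0∞) := (ENNReal.coe_toNNReal hd).symm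
    set d := p.1.toNNReal with hdd
    rw [kl, if_neg hd]
    cases hpd : p.2 d with
    | none =>
      simp only [hpd]
      have hd0 : d ≠ 0 := by
        intro h0
        apply hpmem.1
        funext t
        have := hp t (by rw [hp1, h0]; exact_mod_cast zero_le)
        rw [this, ← hdd, hpd]
      refine ⟨fun t ht => ?_, fun heq => ?_, fun t ht hn => ?_⟩
      · simp only [← hdd]
        rw [hp t ht]
      · have h0lt : ((0:ℝ≥0) : ℝ≥0∞) < p.1 := by
          rw [hp1]; exact_mod_cast zero_lt_iff.mpr hd0
        obtain ⟨x', hx'⟩ := Option.ne_none_iff_exists'.mp (hpmem.2 0 h0lt)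
        have := congrFun heq 0
        simp only [hx', Option.bind_some] at this
        exact ev_zero_ne_none (f x') (hf x').1 (hf x').2 this
      · obtain ⟨x', hx'⟩ := Option.ne_none_iff_exists'.mp (hpmem.2 t ht)
        simp only [hx', Option.bind_some] at hn
        exact ev_zero_ne_none (f x') (hf x').1 (hf x').2 hn
    | some x =>
      simp only [hpd]
      constructor
      · -- Flat
        intro t ht
        simp only at ht ⊢
        have hfx_ne : (f x).1 ≠ ⊤ := by
          intro h
          rw [h, add_top, top_le_iff] at ht
          exact ENNReal.coe_ne_top ht
        have hfx1 : (f x).1 = ((f x).1.toNNReal : ℝ≥0∞) := (ENNReal.coe_toNNReal hfx_ne).symm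
        set e := (f x).1.toNNReal with hee
        have hD : p.1 + (f x).1 = ((d + e : ℝ≥0) : ℝ≥0∞) := by
          rw [hp1, hfx1]; push_cast; ring
        have hDt : (p.1 + (f x).1).toNNReal = d + e := by rw [hD, ENNReal.toNNReal_coe]
        have hde : d + e ≤ t := by
          rw [hD] at ht; exact_mod_cast ht
        have hnt : ¬ ((t : ℝ≥0∞) < p.1) := by
          push_neg
          rw [hp1]
          exact_mod_cast le_trans (le_add_right le_rfl) hde
        have hnD : ¬ (((p.1 + (f x).1).toNNReal : ℝ≥0∞) < p.1) := by
          push_neg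
          rw [hDt, hp1]
          exact_mod_cast le_add_right le_rfl
        rw [if_neg hnt, if_neg hnD, hDt]
        have h1 : d + e - d = e := by simp
        rw [h1]
        have het : e ≤ t - d := le_tsub_of_add_le_left hde
        have := (hf x).1 (t - d) (by rw [hfx1]; exact_mod_cast het)
        rw [this, ← hee]
      · constructor
        · -- not everywhere none
          intro heq
          have := congrFun heq d
          simp only at this
          rw [if_neg (by rw [hp1]; exact lt_irrefl _)] at this
          simp only [← hdd, tsub_self] at this
          exact ev_zero_ne_none (f x) (hf x).1 (hf x).2 this
        · intro t ht hn
          simp only at ht hn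
          by_cases hlt : (t : ℝ≥0∞) < p.1
          · rw [if_pos hlt] at hn
            obtain ⟨x', hx'⟩ := Option.ne_none_iff_exists'.mp (hpmem.2 t hlt)
            simp only [hx', Option.bind_some] at hn
            exact ev_zero_ne_none (f x') (hf x').1 (hf x').2 hn
          · rw [if_neg hlt] at hn
            push_neg at hlt
            have hdt : d ≤ t := by rw [hp1] at hlt; exact_mod_cast hlt
            have hlt2 : ((t - d : ℝ≥0) : ℝ≥0∞) < (f x).1 := by
              by_cases hfx_ne : (f x).1 = ⊤
              · rw [hfx_ne]; exact ENNReal.coe_lt_top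
              · have hfx1 : (f x).1 = ((f x).1.toNNReal : ℝ≥0∞) := (ENNReal.coe_toNNReal hfx_ne).symm
                rw [hfx1]
                rw [hp1, hfx1] at ht
                have : t < d + (f x).1.toNNReal := by exact_mod_cast ht
                exact_mod_cast tsub_lt_iff_left hdt |>.mpr this
            exact (hf x).2.2 (t - d) hlt2 hn
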